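/- arXiv:1411.0281 — 2 statements merged into one kernel-verified Lean document; each statement's English description precedes it below -/
import Mathlib

section
/- For two probability distributions p and q on a finite set with variational distance V(p,q) = ε ≤ 1/2, the absolute difference of their Shannon entropies satisfies |H(p) - H(q)| ≤ ε · log(|X|/ε), where |X| is the cardinality of the support set. -/
open scoped BigOperators

/-- Shannon entropy in bits of a pmf on a finite set. -/
noncomputable def ent {α : Type*} [Fintype α] (p : α → ℝ) : ℝ :=
  -∑ x, p x * Real.logb 2 (p x)

/-- Total variational distance `∑ |p x - q x|`. -/
noncomputable def tv {α : Type*} [Fintype α] (p q : α → ℝ) : ℝ :=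
  ∑ x, |p x - q x|


open Real

lemma eta_subadd {a b : ℝ} (ha : 0 ≤ a) (hb : 0 ≤ b) :
    Real.negMulLog (a + b) ≤ Real.negMulLog a + Real.negMulLog b := by
  have h1 : a * Real.log a ≤ a * Real.log (a + b) := by
    rcases eq_or_lt_of_le ha with h | h
    · simp [← h]
    · exact mul_le_mul_of_nonneg_left (Real.log_le_log h (by linarith)) ha
  have h2 : b * Real.log b ≤ b * Real.log (a + b) := by
    rcases eq_or_lt_of_le hb with h | h
    · simp [← h]
    · exact mul_le_mul_of_nonneg_left (Real.log_le_log h (by linarith)) hb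
  simp only [Real.negMulLog]
  nlinarith [h1, h2]

lemma g_hasDeriv {d : ℝ} (x : ℝ) (hx : 0 < x) (hx1 : x < 1) :
    HasDerivAt (fun y => Real.negMulLog y - Real.negMulLog (1 - y))
      (-(Real.log x + Real.log (1 - x)) - 2) x := by
  have h1 : HasDerivAt Real.negMulLog (-Real.log x - 1) x :=
    Real.hasDerivAt_negMulLog (ne_of_gt hx)
  have h2 : HasDerivAt (fun y : ℝ => 1 - y) (-1) x := by
    simpa using (hasDerivAt_id x).const_sub 1
  have h3 : HasDerivAt (fun y => Real.negMulLog (1 - y))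
      ((-Real.log (1 - x) - 1) * (-1)) x :=
    (Real.hasDerivAt_negMulLog (ne_of_gt (by linarith : (0:ℝ) < 1 - x))).comp x h2
  have := h1.sub h3
  exact this.congr_deriv (by ring)

lemma eta_one_sub {d : ℝ} (hd : 0 ≤ d) (hd2 : d ≤ 1 / 2) :
    Real.negMulLog (1 - d) ≤ Real.negMulLog d := by
  set g : ℝ → ℝ := fun y => Real.negMulLog y - Real.negMulLog (1 - y) with hg
  have hcont : Continuous g := by
    fun_prop
  suffices h : 0 ≤ g d by
    simp only [hg] at h; linarith
  by_cases hc : d * (1 - d) ≤ Real.exp (-2)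
  · -- g monotone on [0, d], g 0 = 0
    have hmono : MonotoneOn g (Set.Icc 0 d) := by
      apply monotoneOn_of_deriv_nonneg (convex_Icc 0 d) hcont.continuousOn
      · intro x hx
        rw [interior_Icc] at hx
        exact ((g_hasDeriv (d := d) x hx.1 (by linarith [hx.2])).differentiableAt).differentiableWithinAt
      · intro x hx
        rw [interior_Icc] at hx
        have hx1 : x < 1 := by linarith [hx.2]
        rw [(g_hasDeriv (d := d) x hx.1 hx1).deriv]
        have hxx : x * (1 - x) ≤ d * (1 - d) := by nlinarith [hx.1, hx.2]
        have hpos : 0 < x * (1 - x) := by nlinarith [hx.1]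
        have : Real.log (x * (1 - x)) ≤ -2 := by
          rw [Real.log_le_iff_le_exp hpos]; linarith
        rw [Real.log_mul (ne_of_gt hx.1) (by linarith)] at this
        linarith
    have h0 : g 0 = 0 := by simp [hg]
    have h := hmono (Set.left_mem_Icc.2 hd) (Set.right_mem_Icc.2 hd) hd
    rw [h0] at h
    exact h
  · -- g antitone on [d, 1/2], g (1/2) = 0
    push_neg at hc
    have hanti : AntitoneOn g (Set.Icc d (1/2)) := by
      apply antitoneOn_of_deriv_nonpos (convex_Icc d (1/2)) hcont.continuousOn
      · intro x hx
        rw [interior_Icc] at hx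
        have hx0 : 0 < x := lt_of_le_of_lt hd hx.1
        exact ((g_hasDeriv (d := d) x hx0 (by linarith [hx.2])).differentiableAt).differentiableWithinAt
      · intro x hx
        rw [interior_Icc] at hx
        have hx0 : 0 < x := lt_of_le_of_lt hd hx.1
        have hx1 : x < 1 := by linarith [hx.2]
        rw [(g_hasDeriv (d := d) x hx0 hx1).deriv]
        have hxx : d * (1 - d) ≤ x * (1 - x) := by nlinarith [hx.1, hx.2]
        have hpos : 0 < x * (1 - x) := by nlinarith
        have : -2 ≤ Real.log (x * (1 - x)) := by
          rw [Real.le_log_iff_exp_le hpos]; linarith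
        rw [Real.log_mul (ne_of_gt hx0) (by linarith)] at this
        linarith
    have h12 : g (1/2) = 0 := by norm_num [hg]
    have h := hanti (Set.mem_Icc.2 ⟨le_refl d, hd2⟩) (Set.right_mem_Icc.2 hd2) hd2
    rw [h12] at h
    exact h

lemma eta_rev {s d : ℝ} (hs : 0 ≤ s) (hsd : s + d ≤ 1) (hd : 0 ≤ d) (hd2 : d ≤ 1 / 2) :
    Real.negMulLog s - Real.negMulLog (s + d) ≤ Real.negMulLog d := by
  set h : ℝ → ℝ := fun y => Real.negMulLog y - Real.negMulLog (y + d) with hh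
  have hcont : Continuous h := by fun_prop
  have hmono : MonotoneOn h (Set.Icc 0 (1 - d)) := by
    apply monotoneOn_of_deriv_nonneg (convex_Icc 0 (1 - d)) hcont.continuousOn
    · intro x hx
      rw [interior_Icc] at hx
      have h1 : HasDerivAt Real.negMulLog (-Real.log x - 1) x :=
        Real.hasDerivAt_negMulLog (ne_of_gt hx.1)
      have h2 : HasDerivAt (fun y : ℝ => y + d) 1 x := (hasDerivAt_id x).add_const d
      have h3 : HasDerivAt (fun y => Real.negMulLog (y + d))
          ((-Real.log (x + d) - 1) * 1) x :=
        by have := (Real.hasDerivAt_negMulLog (ne_of_gt (by linarith [hx.1] : (0:ℝ) < x + d))).comp x h2; exact this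
      exact ((h1.sub h3).differentiableAt).differentiableWithinAt
    · intro x hx
      rw [interior_Icc] at hx
      have h1 : HasDerivAt Real.negMulLog (-Real.log x - 1) x :=
        Real.hasDerivAt_negMulLog (ne_of_gt hx.1)
      have h2 : HasDerivAt (fun y : ℝ => y + d) 1 x := (hasDerivAt_id x).add_const d
      have h3 : HasDerivAt (fun y => Real.negMulLog (y + d))
          ((-Real.log (x + d) - 1) * 1) x :=
        by have := (Real.hasDerivAt_negMulLog (ne_of_gt (by linarith [hx.1] : (0:ℝ) < x + d))).comp x h2; exact this
      rw [show deriv h x = _ from (h1.sub h3).deriv]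
      have := Real.log_le_log hx.1 (by linarith : x ≤ x + d)
      linarith
  have h1d : h (1 - d) = Real.negMulLog (1 - d) := by
    simp [hh, show 1 - d + d = 1 by ring]
  have hle := hmono (Set.mem_Icc.2 ⟨hs, by linarith⟩) (Set.right_mem_Icc.2 (by linarith)) (by linarith)
  rw [h1d] at hle
  calc Real.negMulLog s - Real.negMulLog (s + d) = h s := rfl
    _ ≤ Real.negMulLog (1 - d) := hle
    _ ≤ Real.negMulLog d := eta_one_sub hd hd2

lemma eta_abs_diff {s t : ℝ} (hs0 : 0 ≤ s) (hs1 : s ≤ 1) (ht0 : 0 ≤ t) (ht1 : t ≤ 1)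
    (hst : |s - t| ≤ 1 / 2) :
    |Real.negMulLog s - Real.negMulLog t| ≤ Real.negMulLog |s - t| := by
  have key : ∀ u v : ℝ, 0 ≤ u → v ≤ 1 → u ≤ v → v - u ≤ 1/2 →
      |Real.negMulLog u - Real.negMulLog v| ≤ Real.negMulLog (v - u) := by
    intro u v hu hv1 huv hd2
    have hd : 0 ≤ v - u := by linarith
    rw [abs_le]
    constructor
    · have : Real.negMulLog (u + (v - u)) ≤ Real.negMulLog u + Real.negMulLog (v - u) :=
        eta_subadd hu hd
      rw [show u + (v - u) = v by ring] at this
      linarith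
    · have := eta_rev hu (by linarith : u + (v - u) ≤ 1) hd hd2
      rw [show u + (v - u) = v by ring] at this
      linarith
  rcases le_total s t with h | h
  · rw [abs_sub_comm s t, abs_of_nonneg (by linarith : (0:ℝ) ≤ t - s)] at *
    rw [abs_sub_comm]
    rw [abs_sub_comm] at *
    exact key s t hs0 ht1 h hst
  · rw [abs_of_nonneg (by linarith : (0:ℝ) ≤ s - t)] at *
    rw [abs_sub_comm]
    exact key t s ht0 hs1 h hst

lemma max_ent_bound {α : Type*} [Fintype α] (a : α → ℝ) (ε : ℝ)
    (ha0 : ∀ x, 0 ≤ a x) (ha1 : ∑ x, a x = ε) (hε : 0 < ε) :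
    ∑ x, Real.negMulLog (a x) ≤ ε * Real.log ((Fintype.card α : ℝ) / ε) := by
  set n : ℝ := (Fintype.card α : ℝ) with hn
  have hcard : 0 < Fintype.card α := by
    by_contra hcontra
    have : Fintype.card α = 0 := by omega
    have hempty : IsEmpty α := Fintype.card_eq_zero_iff.mp this
    rw [Finset.sum_of_isEmpty] at ha1
    linarith
  have hnpos : 0 < n := by rw [hn]; exact_mod_cast hcard
  have key : ∀ x, Real.negMulLog (a x) ≤ ε / n - a x + a x * Real.log (n / ε) := by
    intro x
    rcases eq_or_lt_of_le (ha0 x) with h | h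
    · rw [← h]
      simp only [Real.negMulLog_zero, mul_zero, zero_mul]
      have : 0 < ε / n := by positivity
      linarith
    · have hlog := Real.log_le_sub_one_of_pos (show 0 < (ε / n) / a x by positivity)
      rw [Real.log_div (by positivity) (ne_of_gt h), Real.log_div (ne_of_gt hε) (ne_of_gt hnpos)]
        at hlog
      have hmul := mul_le_mul_of_nonneg_left hlog (le_of_lt h)
      rw [Real.negMulLog, Real.log_div (ne_of_gt hnpos) (ne_of_gt hε)]
      have hax : a x * ((ε / n) / a x) = ε / n := by
        rw [mul_div_assoc']; rw [mul_div_cancel_left₀]; exact ne_of_gt h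
      nlinarith [hmul, hax]
  calc ∑ x, Real.negMulLog (a x) ≤ ∑ x, (ε / n - a x + a x * Real.log (n / ε)) :=
        Finset.sum_le_sum fun x _ => key x
    _ = (Fintype.card α : ℝ) * (ε / n) - ε + ε * Real.log (n / ε) := by
        rw [Finset.sum_add_distrib, Finset.sum_sub_distrib, ← Finset.sum_mul, ha1]
        simp [Finset.sum_const, Finset.card_univ]
    _ = ε * Real.log (n / ε) := by field_simp; rw [← hn]; ring

lemma ent_eq {α : Type*} [Fintype α] (p : α → ℝ) :
    ent p = (∑ x, Real.negMulLog (p x)) / Real.log 2 := by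
  simp only [ent, Real.logb, Real.negMulLog]
  rw [Finset.sum_div]
  rw [← Finset.sum_neg_distrib]
  apply Finset.sum_congr rfl
  intros
  ring

/-- Continuity of entropy (Csiszár–Körner): if the variational distance
`V(p,q) = ε ≤ 1/2`, then `|H(p) - H(q)| ≤ ε · log₂(|X|/ε)`. -/
theorem entropy_continuity {α : Type*} [Fintype α] (p q : α → ℝ) (ε : ℝ)
    (hp0 : ∀ x, 0 ≤ p x) (hp1 : ∑ x, p x = 1)
    (hq0 : ∀ x, 0 ≤ q x) (hq1 : ∑ x, q x = 1)
    (hε : tv p q = ε) (hε2 : ε ≤ 1 / 2) :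
    |ent p - ent q| ≤ ε * Real.logb 2 ((Fintype.card α : ℝ) / ε) := by
  have hε0 : 0 ≤ ε := by
    rw [← hε, tv]
    exact Finset.sum_nonneg fun x _ => abs_nonneg _
  rcases eq_or_lt_of_le hε0 with hz | hpos
  · -- ε = 0 : p = q
    have hpq : p = q := by
      funext x
      have hall := (Finset.sum_eq_zero_iff_of_nonneg
        (fun i (_ : i ∈ Finset.univ) => abs_nonneg (p i - q i))).mp (by rw [← tv, hε, ← hz])
      have := hall x (Finset.mem_univ x)
      have := abs_eq_zero.mp this
      linarith
    rw [hpq, sub_self, abs_zero, ← hz]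
    simp
  · have hlog2 : 0 < Real.log 2 := Real.log_pos (by norm_num)
    have hp_le1 : ∀ x, p x ≤ 1 := fun x =>
      hp1 ▸ Finset.single_le_sum (fun i _ => hp0 i) (Finset.mem_univ x)
    have hq_le1 : ∀ x, q x ≤ 1 := fun x =>
      hq1 ▸ Finset.single_le_sum (fun i _ => hq0 i) (Finset.mem_univ x)
    have habs_le : ∀ x, |p x - q x| ≤ 1 / 2 := by
      intro x
      have : |p x - q x| ≤ tv p q :=
        Finset.single_le_sum (fun i (_ : i ∈ Finset.univ) => abs_nonneg (p i - q i))
          (Finset.mem_univ x)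
      rw [hε] at this
      linarith
    have key1 : |(∑ x, Real.negMulLog (p x)) - ∑ x, Real.negMulLog (q x)|
        ≤ ε * Real.log ((Fintype.card α : ℝ) / ε) := by
      rw [← Finset.sum_sub_distrib]
      calc |∑ x, (Real.negMulLog (p x) - Real.negMulLog (q x))|
          ≤ ∑ x, |Real.negMulLog (p x) - Real.negMulLog (q x)| :=
            Finset.abs_sum_le_sum_abs _ _
        _ ≤ ∑ x, Real.negMulLog |p x - q x| :=
            Finset.sum_le_sum fun x _ =>
              eta_abs_diff (hp0 x) (hp_le1 x) (hq0 x) (hq_le1 x) (habs_le x)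
        _ ≤ ε * Real.log ((Fintype.card α : ℝ) / ε) :=
            max_ent_bound (fun x => |p x - q x|) ε (fun x => abs_nonneg _) hε hpos
    rw [ent_eq, ent_eq, div_sub_div_same, abs_div, abs_of_pos hlog2, Real.logb,
      mul_div_assoc']
    gcongr
end

section
/- Successive cancellation simulation divergence bound (abstract form): let p be a distribution of a random vector A^{1:N} over 𝔽₂^N, let 𝒱 ⊆ {1,…,N}, and define p̃ by p̃(a^j | a^{1:j-1}) = 1/2 for j ∈ 𝒱 and p̃(a^j | a^{1:j-1}) = p(a^j | a^{1:j-1}) for j ∉ 𝒱. If H(A^j | A^{1:j-1}) > 1 - δ for every j ∈ 𝒱, then D(p ‖ p̃) ≤ |𝒱| · δ ≤ N δ. -/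
open scoped BigOperators

/-- Kullback–Leibler divergence in bits. -/
noncomputable def kl {α : Type*} [Fintype α] (p q : α → ℝ) : ℝ :=
  ∑ x, p x * Real.logb 2 (p x / q x)

/-- Keep the coordinates in `S`, set the others to `false`. -/
def maskSet {N : ℕ} (S : Finset (Fin N)) (a : Fin N → Bool) : Fin N → Bool :=
  fun i => if i ∈ S then a i else false

/-- Marginal distribution of the coordinates in `S` (represented on the full space,
supported on masked vectors). -/
noncomputable def marg {N : ℕ} (p : (Fin N → Bool) → ℝ) (S : Finset (Fin N)) :
    (Fin N → Bool) → ℝ :=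
  fun b => ∑ a : Fin N → Bool, if maskSet S a = b then p a else 0

/-- Conditional entropy `H(A^j | A^{1:j-1})` in bits. -/
noncomputable def condEnt {N : ℕ} (p : (Fin N → Bool) → ℝ) (j : Fin N) : ℝ :=
  ent (marg p (Finset.Iic j)) - ent (marg p (Finset.Iio j))

/-- Conditional probability `p(a^j | a^{1:j-1})` evaluated at the vector `a`. -/
noncomputable def condProb {N : ℕ} (p : (Fin N → Bool) → ℝ) (j : Fin N)
    (a : Fin N → Bool) : ℝ :=
  marg p (Finset.Iic j) (maskSet (Finset.Iic j) a) /
    marg p (Finset.Iio j) (maskSet (Finset.Iio j) a)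

/-- The simulated distribution: bits in `𝒱` are drawn uniformly given the past,
the other bits keep `p`'s conditionals. -/
noncomputable def ptilde {N : ℕ} (p : (Fin N → Bool) → ℝ) (𝒱 : Finset (Fin N)) :
    (Fin N → Bool) → ℝ :=
  fun a => ∏ j : Fin N, if j ∈ 𝒱 then (1 : ℝ) / 2 else condProb p j a

section Aux

variable {N : ℕ}

lemma le_marg (p : (Fin N → Bool) → ℝ) (hp0 : ∀ a, 0 ≤ p a) (S : Finset (Fin N))
    (a : Fin N → Bool) : p a ≤ marg p S (maskSet S a) := by
  have h := Finset.single_le_sum (f := fun a' => if maskSet S a' = maskSet S a then p a' else 0)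
    (fun a' _ => by split
                    · exact hp0 a'
                    · exact le_refl 0) (Finset.mem_univ a)
  simpa [marg] using h

lemma marg_pos (p : (Fin N → Bool) → ℝ) (hp0 : ∀ a, 0 ≤ p a) (S : Finset (Fin N))
    (a : Fin N → Bool) (ha : 0 < p a) : 0 < marg p S (maskSet S a) :=
  lt_of_lt_of_le ha (le_marg p hp0 S a)

lemma condProb_pos (p : (Fin N → Bool) → ℝ) (hp0 : ∀ a, 0 ≤ p a) (j : Fin N)
    (a : Fin N → Bool) (ha : 0 < p a) : 0 < condProb p j a :=
  div_pos (marg_pos p hp0 _ a ha) (marg_pos p hp0 _ a ha)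

lemma Iio_eq_filter (j : Fin N) :
    Finset.Iio j = Finset.univ.filter (fun i : Fin N => (i : ℕ) < (j : ℕ)) := by
  ext i
  simp only [Finset.mem_Iio, Finset.mem_filter, Finset.mem_univ, true_and, Fin.lt_def]

lemma Iic_eq_filter (j : Fin N) :
    Finset.Iic j = Finset.univ.filter (fun i : Fin N => (i : ℕ) < (j : ℕ) + 1) := by
  ext i
  simp only [Finset.mem_Iic, Finset.mem_filter, Finset.mem_univ, true_and, Fin.le_def,
    Nat.lt_succ_iff]

/-- chain rule -/
lemma chain (p : (Fin N → Bool) → ℝ) (hp0 : ∀ a, 0 ≤ p a) (hp1 : ∑ a, p a = 1)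
    (a : Fin N → Bool) (ha : 0 < p a) :
    ∏ j : Fin N, condProb p j a = p a := by
  set F : ℕ → ℝ := fun k =>
    marg p (Finset.univ.filter (fun i : Fin N => (i : ℕ) < k))
      (maskSet (Finset.univ.filter (fun i : Fin N => (i : ℕ) < k)) a) with hF
  have hFpos : ∀ k, 0 < F k := fun k => marg_pos p hp0 _ a ha
  have hstep : ∏ j : Fin N, condProb p j a = ∏ j : Fin N, (fun k => F (k + 1) / F k) (j : ℕ) := by
    refine Finset.prod_congr rfl fun j _ => ?_
    simp only [condProb, Iio_eq_filter, Iic_eq_filter, hF]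
  rw [hstep, Fin.prod_univ_eq_prod_range (fun k => F (k + 1) / F k) N]
  have htel : ∀ n, ∏ k ∈ Finset.range n, (F (k + 1) / F k) = F n / F 0 := by
    intro n
    induction n with
    | zero => simp [div_self (hFpos 0).ne']
    | succ n ih =>
      rw [Finset.prod_range_succ, ih]
      field_simp [(hFpos 0).ne', (hFpos n).ne', (hFpos (n + 1)).ne']
  rw [htel]
  have hF0 : F 0 = 1 := by
    have h1 : (Finset.univ.filter (fun i : Fin N => (i : ℕ) < 0)) = (∅ : Finset (Fin N)) := by
      simp
    have h2 : ∀ a' : Fin N → Bool, maskSet (∅ : Finset (Fin N)) a' = fun _ => false := by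
      intro a'; funext i; simp [maskSet]
    simp only [hF, h1, marg, h2, if_pos rfl]
    exact hp1
  have hFN : F N = p a := by
    have h1 : (Finset.univ.filter (fun i : Fin N => (i : ℕ) < N)) = (Finset.univ : Finset (Fin N)) := by
      simp [Fin.is_lt]
    have h2 : ∀ b : Fin N → Bool, maskSet (Finset.univ : Finset (Fin N)) b = b := by
      intro b; funext i; simp [maskSet]
    simp only [hF, h1, marg, h2]
    simp
  rw [hF0, hFN, div_one]

lemma sum_p_logb_marg (p : (Fin N → Bool) → ℝ) (S : Finset (Fin N)) :
    ∑ a, p a * Real.logb 2 (marg p S (maskSet S a)) = -ent (marg p S) := by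
  unfold ent
  rw [neg_neg]
  have h1 : ∀ b : Fin N → Bool, marg p S b * Real.logb 2 (marg p S b)
      = ∑ a : Fin N → Bool, if maskSet S a = b then p a * Real.logb 2 (marg p S b) else 0 := by
    intro b
    rw [marg, Finset.sum_mul]
    exact Finset.sum_congr rfl fun a _ => by rw [ite_mul, zero_mul]
  rw [Finset.sum_congr rfl (fun b _ => h1 b), Finset.sum_comm]
  refine Finset.sum_congr rfl fun a _ => ?_
  rw [Finset.sum_ite_eq]
  simp

end Aux

/-- Successive cancellation simulation divergence bound: if every bit in `𝒱` has
conditional entropy `> 1 - δ`, then `D(p ‖ p̃) ≤ |𝒱| δ ≤ N δ`. -/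
theorem kl_ptilde_le {N : ℕ} (p : (Fin N → Bool) → ℝ) (𝒱 : Finset (Fin N)) (δ : ℝ)
    (hp0 : ∀ a, 0 ≤ p a) (hp1 : ∑ a, p a = 1) (hδ : 0 < δ)
    (hH : ∀ j ∈ 𝒱, condEnt p j > 1 - δ) :
    kl p (ptilde p 𝒱) ≤ (𝒱.card : ℝ) * δ ∧ (𝒱.card : ℝ) * δ ≤ (N : ℝ) * δ := by
  constructor
  · have key : ∀ a : Fin N → Bool,
        p a * Real.logb 2 (p a / ptilde p 𝒱 a)
          = ∑ j ∈ 𝒱, (p a * 1 + p a * Real.logb 2 (condProb p j a)) := by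
      intro a
      rcases eq_or_lt_of_le (hp0 a) with h | h
      · simp [← h]
      · have hc : ∀ j : Fin N, 0 < condProb p j a := fun j => condProb_pos p hp0 j a h
        have hratio : p a / ptilde p 𝒱 a
            = ∏ j : Fin N,
                (condProb p j a / (if j ∈ 𝒱 then (1 : ℝ) / 2 else condProb p j a)) := by
          symm
          rw [Finset.prod_div_distrib, chain p hp0 hp1 a h]
          rfl
        have hne : ∀ j ∈ (Finset.univ : Finset (Fin N)),
            condProb p j a / (if j ∈ 𝒱 then (1 : ℝ) / 2 else condProb p j a) ≠ 0 := by
          intro j _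
          split
          · exact div_ne_zero (hc j).ne' (by norm_num)
          · rw [div_self (hc j).ne']; norm_num
        rw [hratio, Real.logb_prod _ _ hne]
        have hterm : ∀ j ∈ (Finset.univ : Finset (Fin N)),
            Real.logb 2 (condProb p j a / (if j ∈ 𝒱 then (1 : ℝ) / 2 else condProb p j a))
              = if j ∈ 𝒱 then 1 + Real.logb 2 (condProb p j a) else 0 := by
          intro j _
          by_cases hj : j ∈ 𝒱
          · simp only [hj, if_true]
            rw [div_div_eq_mul_div, div_one, mul_comm,
              Real.logb_mul (by norm_num) (hc j).ne',
              Real.logb_self_eq_one (by norm_num)]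
          · simp only [hj, if_false]
            rw [div_self (hc j).ne', Real.logb_one]
        rw [Finset.sum_congr rfl hterm]
        rw [Finset.sum_ite_mem, Finset.univ_inter, Finset.mul_sum]
        exact Finset.sum_congr rfl fun j _ => by ring
    have hkl : kl p (ptilde p 𝒱) = ∑ j ∈ 𝒱, (1 - condEnt p j) := by
      unfold kl
      rw [Finset.sum_congr rfl (fun a _ => key a), Finset.sum_comm]
      refine Finset.sum_congr rfl fun j hj => ?_
      rw [Finset.sum_add_distrib]
      have h1 : ∑ a, p a * 1 = 1 := by simpa using hp1
      have h2 : ∑ a, p a * Real.logb 2 (condProb p j a) = -condEnt p j := by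
        have hterm : ∀ a : Fin N → Bool, p a * Real.logb 2 (condProb p j a)
            = p a * Real.logb 2 (marg p (Finset.Iic j) (maskSet (Finset.Iic j) a))
              - p a * Real.logb 2 (marg p (Finset.Iio j) (maskSet (Finset.Iio j) a)) := by
          intro a
          rcases eq_or_lt_of_le (hp0 a) with h | h
          · simp [← h]
          · rw [condProb, Real.logb_div (marg_pos p hp0 _ a h).ne'
              (marg_pos p hp0 _ a h).ne', mul_sub]
        rw [Finset.sum_congr rfl (fun a _ => hterm a), Finset.sum_sub_distrib,
          sum_p_logb_marg, sum_p_logb_marg, condEnt]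
        ring
      rw [h1, h2]
      ring
    rw [hkl]
    calc ∑ j ∈ 𝒱, (1 - condEnt p j) ≤ ∑ _j ∈ 𝒱, δ :=
          Finset.sum_le_sum fun j hj => by linarith [hH j hj]
      _ = (𝒱.card : ℝ) * δ := by rw [Finset.sum_const, nsmul_eq_mul]
  · have hcard : (𝒱.card : ℝ) ≤ (N : ℝ) := by
      exact_mod_cast (Finset.card_le_univ 𝒱).trans_eq (by simp)
    exact mul_le_mul_of_nonneg_right hcard hδ.le
end
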